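/- Let F: GF(2^n) → GF(2^n) be a function and define for a ≠ 0 and b the quantity δ(a,b) = #{x ∈ GF(2^n) : F(x + a) + F(x) = b}. If F is differentially two-valued, i.e., the set {δ(a,b) : a ∈ GF(2^n)*, b ∈ GF(2^n)} has exactly two elements, then one of the values is 0 and the other is a power of 2, i.e., {δ(a,b)} = {0, 2^s} for some 1 ≤ s ≤ n. -/
import Mathlib

open Finset

/-- a differentially two-valued function on `GF(2^n)` takes the
differential values `{0, 2^s}` for some `1 ≤ s ≤ n`. -/
theorem diff_two_valued (n : ℕ) (hn : 0 < n)
    (K : Type*) [Field K] [Fintype K] (hK : Fintype.card K = 2 ^ n)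
    (Fv : K → K)
    (htwo : {d : ℕ | ∃ a b : K, a ≠ 0 ∧
        Nat.card {x : K // Fv (x + a) + Fv x = b} = d}.ncard = 2) :
    ∃ s : ℕ, 1 ≤ s ∧ s ≤ n ∧
      {d : ℕ | ∃ a b : K, a ≠ 0 ∧
        Nat.card {x : K // Fv (x + a) + Fv x = b} = d} = {0, 2 ^ s} := by
  classical
  set S := {d : ℕ | ∃ a b : K, a ≠ 0 ∧
        Nat.card {x : K // Fv (x + a) + Fv x = b} = d} with hSdef
  -- the characteristic of K is 2
  have hp : (ringChar K).Prime := CharP.char_is_prime K (ringChar K)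
  have hdvdcard : ringChar K ∣ Fintype.card K :=
    (CharP.cast_eq_zero_iff K (ringChar K) (Fintype.card K)).mp
      (FiniteField.cast_card_eq_zero K)
  have hchar : ringChar K = 2 := by
    rw [hK] at hdvdcard
    have := hp.dvd_of_dvd_pow hdvdcard
    exact (Nat.prime_dvd_prime_iff_eq hp Nat.prime_two).mp this
  have h2 : (2 : K) = 0 := by
    have := CharP.cast_eq_zero K (ringChar K)
    rwa [hchar] at this
  have haa : ∀ x : K, x + x = 0 := fun x => by
    rw [← two_mul, h2, zero_mul]
  -- no δ(a,b) equals 1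
  have hne1 : ∀ a b : K, a ≠ 0 → Nat.card {x : K // Fv (x + a) + Fv x = b} ≠ 1 := by
    intro a b ha h1
    rw [Nat.card_eq_fintype_card, Fintype.card_eq_one_iff] at h1
    obtain ⟨⟨x, hx⟩, hu⟩ := h1
    have hx2 : Fv (x + a + a) + Fv (x + a) = b := by
      rw [add_assoc, haa a, add_zero, add_comm]
      exact hx
    have h3 := hu ⟨x + a, hx2⟩
    have h4 : x + a = x := congrArg Subtype.val h3
    exact ha (by rwa [add_eq_left] at h4)
  -- the sum of δ(a,b) over b is 2^n
  have hsum : ∀ a : K, ∑ b : K, Nat.card {x : K // Fv (x + a) + Fv x = b} = 2 ^ n := by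
    intro a
    have heq : ∀ b : K, Nat.card {x : K // Fv (x + a) + Fv x = b}
        = (univ.filter (fun x => Fv (x + a) + Fv x = b)).card := by
      intro b
      rw [Nat.card_eq_fintype_card, Fintype.card_subtype]
    simp_rw [heq]
    rw [← Finset.card_eq_sum_card_fiberwise
        (f := fun x => Fv (x + a) + Fv x) (fun x _ => mem_univ _), card_univ, hK]
  have hpos : 0 < 2 ^ n := pow_pos two_pos n
  obtain ⟨a, ha⟩ := exists_ne (0 : K)
  -- 0 is one of the two values
  have h0S : (0 : ℕ) ∈ S := by
    by_contra h0
    have hge : ∀ b : K, 2 ≤ Nat.card {x : K // Fv (x + a) + Fv x = b} := by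
      intro b
      have hmem : Nat.card {x : K // Fv (x + a) + Fv x = b} ∈ S := ⟨a, b, ha, rfl⟩
      have hne0 : Nat.card {x : K // Fv (x + a) + Fv x = b} ≠ 0 := by
        intro h; rw [h] at hmem; exact h0 hmem
      have := hne1 a b ha
      omega
    have hle : 2 * 2 ^ n ≤ ∑ b : K, Nat.card {x : K // Fv (x + a) + Fv x = b} := by
      calc 2 * 2 ^ n = ∑ _b : K, 2 := by
            rw [Finset.sum_const, card_univ, hK, smul_eq_mul, mul_comm]
        _ ≤ _ := Finset.sum_le_sum fun b _ => hge b
    rw [hsum a] at hle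
    linarith
  obtain ⟨d1, d2, hd12, hS⟩ := Set.ncard_eq_two.mp htwo
  have hd : ∃ d, d ≠ 0 ∧ S = {0, d} := by
    rw [hS] at h0S ⊢
    rcases h0S with h | h
    · exact ⟨d2, fun h2 => hd12 (by rw [← h, h2]), by rw [h]⟩
    · exact ⟨d1, fun h1 => hd12 (by rw [← h, h1]), by rw [h, Set.pair_comm]⟩
  obtain ⟨d, hdne, hSd⟩ := hd
  -- d divides 2^n
  have hdvd : d ∣ 2 ^ n := by
    rw [← hsum a]
    apply Finset.dvd_sum
    intro b _
    have hmem : Nat.card {x : K // Fv (x + a) + Fv x = b} ∈ S := ⟨a, b, ha, rfl⟩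
    rw [hSd] at hmem
    rcases hmem with h | h
    · rw [h]
      exact dvd_zero d
    · rw [Set.mem_singleton_iff] at h
      rw [h]
  obtain ⟨s, hsn, hds⟩ := (Nat.dvd_prime_pow Nat.prime_two).mp hdvd
  -- d ≠ 1, so s ≥ 1
  have hdS : d ∈ S := by rw [hSd]; exact Set.mem_insert_iff.mpr (Or.inr rfl)
  obtain ⟨a', b', ha', hd'⟩ := hdS
  have hd1 : d ≠ 1 := fun h => hne1 a' b' ha' (hd'.trans h)
  have hs1 : 1 ≤ s := by
    by_contra h
    push_neg at h
    interval_cases s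
    simp at hds
    exact hd1 hds
  exact ⟨s, hs1, hsn, by rw [hSd, hds]⟩
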